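/- For every prime $p$ and also over $\mathbb{R}$, the equation $-9x^2+2xy+7y^2+2z^2 = (2t^2-1)^2$ has a solution in $\mathbb{Z}_p^4$ (respectively in $\mathbb{R}^4$) with at least one of $x,y,z$ a unit in $\mathbb{Z}_p$ (respectively $(x,y,z)\neq(0,0,0)$). -/

import Mathlib

lemma isUnit_intCast_padic {p : ℕ} [Fact p.Prime] (k : ℤ) (h : ¬ (p : ℤ) ∣ k) :
    IsUnit (k : ℤ_[p]) := by
  by_contra hk
  rw [PadicInt.not_isUnit_iff, PadicInt.norm_int_lt_one_iff_dvd] at hk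
  exact h hk

/-- For every prime `p` the equation
`-9x² + 2xy + 7y² + 2z² = (2t²-1)²` has a solution in `ℤ_p⁴` with at least one
of `x,y,z` a unit of `ℤ_p`, and it has a real solution with `(x,y,z) ≠ (0,0,0)`. -/
theorem stmt9 :
    (∀ (p : ℕ) [Fact p.Prime],
      ∃ x y z t : ℤ_[p],
        -9 * x ^ 2 + 2 * x * y + 7 * y ^ 2 + 2 * z ^ 2 = (2 * t ^ 2 - 1) ^ 2 ∧
        (IsUnit x ∨ IsUnit y ∨ IsUnit z)) ∧
    (∃ x y z t : ℝ,
      -9 * x ^ 2 + 2 * x * y + 7 * y ^ 2 + 2 * z ^ 2 = (2 * t ^ 2 - 1) ^ 2 ∧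
      (x, y, z) ≠ (0, 0, 0)) := by
  constructor
  · intro p hp
    by_cases h3 : p = 3
    · subst h3
      have h8 : IsUnit ((8 : ℤ) : ℤ_[3]) := isUnit_intCast_padic 8 (by decide)
      obtain ⟨u, hu⟩ := isUnit_iff_exists_inv.mp h8
      refine ⟨-3 * u, 5 * u, 0, 0, ?_, Or.inr (Or.inl ?_)⟩
      · push_cast at hu ⊢
        linear_combination (8 * u + 1) * hu
      · exact ((isUnit_intCast_padic 5 (by decide)).mul
          (IsUnit.of_mul_eq_one (a := u) _ (by rw [mul_comm]; exact_mod_cast hu)))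
    · have h3' : IsUnit ((3 : ℤ) : ℤ_[p]) := by
        apply isUnit_intCast_padic
        intro hd
        have hd' : p ∣ 3 := by exact_mod_cast hd
        exact h3 ((Nat.prime_dvd_prime_iff_eq Fact.out Nat.prime_three).mp hd')
      obtain ⟨u, hu⟩ := isUnit_iff_exists_inv.mp h3'
      refine ⟨-5 * u, 4 * u, 3, 0, ?_, Or.inr (Or.inr ?_)⟩
      · push_cast at hu ⊢
        linear_combination (-17 * (3 * u + 1)) * hu
      · exact_mod_cast h3'
  · refine ⟨-5/3, 4/3, 3, 0, by norm_num, by simp⟩
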